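/- If ℓ : ℝ^d → ℝ is an affine function and ∫_{F_i} ℓ dH^{d−1} = 0 for every i = 0, …, d, then ℓ = 0. -/

import Mathlib

open MeasureTheory Module Set

noncomputable section

/-- The facet `F_i = {x ∈ T : λᵢ(x) = 0}` of the simplex `T = conv{v₀,…,v_d}`. -/
def facet {d : ℕ} (v : Fin (d + 1) → EuclideanSpace ℝ (Fin d))
    (L : Fin (d + 1) → (EuclideanSpace ℝ (Fin d) →ᵃ[ℝ] ℝ)) (i : Fin (d + 1)) :
    Set (EuclideanSpace ℝ (Fin d)) :=
  {x ∈ convexHull ℝ (Set.range v) | L i x = 0}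

/-- an affine function with vanishing integral over every facet of the simplex
vanishes identically. -/
-- Haar instance for Hausdorff measure of top dimension on Euclidean space
lemma haar_inst (n : ℕ) :
    (μH[(n : ℝ)] : Measure (EuclideanSpace ℝ (Fin n))).IsAddHaarMeasure := by
  have h : ((n : ℕ) : ℝ) = ((finrank ℝ (EuclideanSpace ℝ (Fin n)) : ℕ) : ℝ) := by simp
  rw [h]
  infer_instance

lemma simplex_sum_eq {n : ℕ} (w : Fin (n + 1) → EuclideanSpace ℝ (Fin n))
    (hw : AffineIndependent ℝ w) (g : EuclideanSpace ℝ (Fin n) →ᵃ[ℝ] ℝ)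
    (hg : ∫ x in convexHull ℝ (Set.range w), g x ∂(μH[(n : ℝ)]) = 0) :
    ∑ j, g (w j) = 0 := by
  classical
  let E := EuclideanSpace ℝ (Fin n)
  set μ : Measure (EuclideanSpace ℝ (Fin n)) := μH[(n : ℝ)] with hμ
  haveI : μ.IsAddHaarMeasure := haar_inst n
  have htop : affineSpan ℝ (Set.range w) = ⊤ := by
    rw [hw.affineSpan_eq_top_iff_card_eq_finrank_add_one]
    simp
  set T := convexHull ℝ (Set.range w) with hT
  have hTcpt : IsCompact T := (Set.finite_range w).isCompact_convexHull ℝ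
  have hTmeas : MeasurableSet T := hTcpt.isClosed.measurableSet
  have hTne : (interior T).Nonempty := by
    rw [(convex_convexHull ℝ _).interior_nonempty_iff_affineSpan_eq_top,
      affineSpan_convexHull]
    exact htop
  have hpos : 0 < μ T :=
    lt_of_lt_of_le (isOpen_interior.measure_pos μ hTne) (measure_mono interior_subset)
  have hlt : μ T < ⊤ := hTcpt.measure_lt_top
  set b : AffineBasis (Fin (n + 1)) ℝ (EuclideanSpace ℝ (Fin n)) := ⟨w, hw, htop⟩ with hb
  have hbw : ∀ l, b l = w l := fun l => rfl
  -- integrability of affine functions on T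
  have hint : ∀ f : EuclideanSpace ℝ (Fin n) →ᵃ[ℝ] ℝ, IntegrableOn (fun x => f x) T μ := fun f =>
    (f.continuous_of_finiteDimensional.continuousOn).integrableOn_compact hTcpt
  -- symmetry: all coordinate integrals agree
  have hsym : ∀ j j' : Fin (n + 1),
      ∫ x in T, b.coord j x ∂μ = ∫ x in T, b.coord j' x ∂μ := by
    intro j j'
    set π : Equiv.Perm (Fin (n + 1)) := Equiv.swap j j' with hπ
    set c : AffineBasis (Fin (n + 1)) ℝ (EuclideanSpace ℝ (Fin n)) := b.reindex π.symm with hc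
    have hcl : ∀ l, c l = b (π l) := by
      intro l; simp [hc, AffineBasis.reindex_apply]
    -- linear equiv sending b l - b j to c l - c j
    set A : EuclideanSpace ℝ (Fin n) ≃ₗ[ℝ] EuclideanSpace ℝ (Fin n) := (b.basisOf j).equiv (c.basisOf j) (Equiv.refl _) with hA
    have hA0 : ∀ l (h : l ≠ j), A (b l - b j) = c l - c j := by
      intro l h
      have h1 : b.basisOf j ⟨l, h⟩ = b l - b j := by
        rw [AffineBasis.basisOf_apply]; exact vsub_eq_sub _ _
      have h2 : c.basisOf j ⟨l, h⟩ = c l - c j := by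
        rw [AffineBasis.basisOf_apply]; exact vsub_eq_sub _ _
      rw [← h1, ← h2]
      simpa using (b.basisOf j).equiv_apply (c.basisOf j) (Equiv.refl _) (i := ⟨l, h⟩)
    set σ : EuclideanSpace ℝ (Fin n) ≃ᵃ[ℝ] EuclideanSpace ℝ (Fin n) := AffineEquiv.mk' (fun x => A (x - b j) + c j) A (b j)
      (fun p => by simp [vsub_eq_sub, vadd_eq_add]) with hσ
    have hσb : ∀ l, σ (b l) = c l := by
      intro l
      by_cases h : l = j
      · subst h
        show A (b l - b l) + c l = c l
        rw [sub_self, map_zero, zero_add]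
      · show A (b l - b j) + c j = c l
        rw [hA0 l h]; abel
    have hcont : Continuous σ := σ.continuous_of_finiteDimensional
    have hcont' : Continuous σ.symm := σ.symm.continuous_of_finiteDimensional
    set σh : Homeomorph (EuclideanSpace ℝ (Fin n)) (EuclideanSpace ℝ (Fin n)) :=
      ⟨σ.toEquiv, hcont, hcont'⟩ with hσh
    have hemb : MeasurableEmbedding ⇑σ := σh.toMeasurableEquiv.measurableEmbedding
    have himg : ⇑σ '' T = T := by
      have h1 : ⇑σ '' T = convexHull ℝ (⇑σ '' Set.range w) := by
        rw [hT]
        exact σ.toAffineMap.image_convexHull _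
      have h2 : ⇑σ '' Set.range w = Set.range w := by
        rw [← Set.range_comp]
        have : ⇑σ ∘ w = w ∘ ⇑π := funext fun l => by
          show σ (b l) = w (π l)
          rw [hσb l, hcl l, hbw]
        rw [this, Set.range_comp, Set.range_eq_univ.2 π.surjective, Set.image_univ]
      rw [h1, h2, hT]
    have hAd : LinearMap.det (A.toLinearMap) ≠ 0 := (LinearEquiv.isUnit_det' A).ne_zero
    have hAm : Measurable ⇑A.toLinearMap :=
      A.toLinearMap.continuous_of_finiteDimensional.measurable
    have hfun : ⇑σ = (fun y => (c j - A (b j)) + y) ∘ ⇑A.toLinearMap := funext fun x => by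
      show A (x - b j) + c j = (c j - A (b j)) + A x
      rw [map_sub]; abel
    have hmap : Measure.map (⇑σ) μ = ENNReal.ofReal |(LinearMap.det A.toLinearMap)⁻¹| • μ := by
      rw [hfun, ← Measure.map_map (measurable_const_add _) hAm,
        Measure.map_linearMap_addHaar_eq_smul_addHaar μ hAd, Measure.map_smul,
        (measurePreserving_add_left μ (c j - A (b j))).map_eq]
    have hpre : ⇑σ ⁻¹' T = T := by
      nth_rewrite 1 [← himg]
      rw [Set.preimage_image_eq _ σ.injective]
    have h1 : ENNReal.ofReal |(LinearMap.det A.toLinearMap)⁻¹| * μ T = μ T := by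
      have h2 := congrArg (fun m : Measure (EuclideanSpace ℝ (Fin n)) => m T) hmap
      simp only [Measure.map_apply hcont.measurable hTmeas, hpre, Measure.smul_apply,
        smul_eq_mul] at h2
      exact h2.symm
    have hd1 : ENNReal.ofReal |(LinearMap.det A.toLinearMap)⁻¹| = 1 := by
      have hx0 : μ T ≠ 0 := hpos.ne'
      have hxt : μ T ≠ ⊤ := hlt.ne
      calc ENNReal.ofReal |(LinearMap.det A.toLinearMap)⁻¹|
          = ENNReal.ofReal |(LinearMap.det A.toLinearMap)⁻¹| * (μ T * (μ T)⁻¹) := by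
            rw [ENNReal.mul_inv_cancel hx0 hxt, mul_one]
        _ = (ENNReal.ofReal |(LinearMap.det A.toLinearMap)⁻¹| * μ T) * (μ T)⁻¹ := by
            rw [mul_assoc]
        _ = μ T * (μ T)⁻¹ := by rw [h1]
        _ = 1 := ENNReal.mul_inv_cancel hx0 hxt
    have hmp : MeasurePreserving (⇑σ) μ μ :=
      ⟨hcont.measurable, by rw [hmap, hd1, one_smul]⟩
    have hcoordσ : ∀ x, b.coord j (σ x) = b.coord (π.symm j) x := by
      intro x
      set u : Fin (n + 1) → ℝ := fun l => b.coord l x with hu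
      have hu1 : ∑ l, u l = 1 := b.sum_coord_apply_eq_one x
      have hx : Finset.univ.affineCombination ℝ ⇑b u = x :=
        b.affineCombination_coord_eq_self x
      have hus : ∑ l, (u ∘ ⇑π.symm) l = 1 := by
        rw [← hu1]
        exact Equiv.sum_comp π.symm u
      have hσx : σ x = Finset.univ.affineCombination ℝ ⇑b (u ∘ ⇑π.symm) := by
        have e1 : σ x = Finset.univ.affineCombination ℝ (⇑σ ∘ ⇑b) u := by
          rw [← hx]
          exact Finset.map_affineCombination _ _ _ hu1 σ.toAffineMap
        have e2 : ⇑σ ∘ ⇑b = ⇑b ∘ ⇑π := funext fun l => by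
          show σ (b l) = b (π l)
          rw [hσb l, hcl l]
        have e3 : (Finset.univ.map π.toEmbedding).affineCombination ℝ ⇑b (u ∘ ⇑π.symm)
            = Finset.univ.affineCombination ℝ (⇑b ∘ ⇑π) ((u ∘ ⇑π.symm) ∘ ⇑π) :=
          Finset.affineCombination_map _ _ _ _
        have e4 : ((u ∘ ⇑π.symm) ∘ ⇑π) = u := funext fun l => by
          simp
        rw [Finset.map_univ_equiv π] at e3
        rw [e4] at e3
        rw [e1, e2, ← e3]
      rw [hσx, b.coord_apply_combination_of_mem (Finset.mem_univ j) hus]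
      rfl
    have hπj : π.symm j = j' := by
      simp [hπ, Equiv.swap_apply_left]
    calc ∫ x in T, b.coord j x ∂μ
        = ∫ x in ⇑σ ⁻¹' T, b.coord j (σ x) ∂μ :=
          (hmp.setIntegral_preimage_emb hemb _ _).symm
      _ = ∫ x in T, b.coord j' x ∂μ := by
          rw [hpre]
          refine setIntegral_congr_fun hTmeas fun x _ => ?_
          rw [hcoordσ x, hπj]
  -- coordinate integrals
  have hsumc : ∑ m, ∫ x in T, b.coord m x ∂μ = (μ T).toReal := by
    rw [← integral_finset_sum _ (fun m _ => hint (b.coord m))]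
    have : ∀ x, ∑ m, b.coord m x = (1 : ℝ) := fun x => b.sum_coord_apply_eq_one x
    rw [show (fun x => ∑ m, b.coord m x) = fun _ => (1:ℝ) from funext this]
    simp [Measure.restrict_apply_univ]
    rfl
  have hval : ∀ m, ∫ x in T, b.coord m x ∂μ = (μ T).toReal / (n + 1) := by
    intro m
    have h2 : ∑ m', ∫ x in T, b.coord m' x ∂μ = (n + 1 : ℝ) * ∫ x in T, b.coord m x ∂μ := by
      rw [Finset.sum_congr rfl (fun m' _ => hsym m' m), Finset.sum_const, Finset.card_univ]
      simp [nsmul_eq_mul]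
    rw [h2] at hsumc
    field_simp [hsumc]
    linarith [hsumc]
  have hgx : ∀ x, g x = ∑ m, b.coord m x * g (w m) := by
    intro x
    have hu1 : ∑ l, b.coord l x = 1 := b.sum_coord_apply_eq_one x
    have hx : Finset.univ.affineCombination ℝ ⇑b (fun l => b.coord l x) = x :=
      b.affineCombination_coord_eq_self x
    calc g x = g (Finset.univ.affineCombination ℝ ⇑b (fun l => b.coord l x)) := by rw [hx]
      _ = Finset.univ.affineCombination ℝ (⇑g ∘ ⇑b) (fun l => b.coord l x) :=
          Finset.map_affineCombination _ _ _ hu1 g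
      _ = ∑ m, b.coord m x • (⇑g ∘ ⇑b) m :=
          Finset.affineCombination_eq_linear_combination _ _ _ hu1
      _ = ∑ m, b.coord m x * g (w m) := by
          refine Finset.sum_congr rfl fun m _ => ?_
          rw [smul_eq_mul]
          rfl
  have hintg : ∫ x in T, g x ∂μ = ((μ T).toReal / (n + 1)) * ∑ m, g (w m) := by
    calc ∫ x in T, g x ∂μ = ∫ x in T, ∑ m, b.coord m x * g (w m) ∂μ := by
          refine setIntegral_congr_fun hTmeas fun x _ => hgx x
      _ = ∑ m, ∫ x in T, b.coord m x * g (w m) ∂μ :=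
          integral_finset_sum _ (fun m _ => (hint (b.coord m)).mul_const _)
      _ = ∑ m, (∫ x in T, b.coord m x ∂μ) * g (w m) := by
          refine Finset.sum_congr rfl fun m _ => ?_
          exact integral_mul_const _ _
      _ = ∑ m, ((μ T).toReal / (n + 1)) * g (w m) := by
          refine Finset.sum_congr rfl fun m _ => ?_
          rw [hval m]
      _ = ((μ T).toReal / (n + 1)) * ∑ m, g (w m) := by
          rw [Finset.mul_sum]
  have hc0 : (μ T).toReal / (n + 1) ≠ 0 := by
    have : 0 < (μ T).toReal := ENNReal.toReal_pos hpos.ne' hlt.ne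
    positivity
  rw [hg] at hintg
  exact (mul_eq_zero.mp hintg.symm).resolve_left hc0


lemma facet_eq {k : ℕ} (v : Fin (k + 2) → EuclideanSpace ℝ (Fin (k + 1)))
    (hv : AffineIndependent ℝ v)
    (L : Fin (k + 2) → (EuclideanSpace ℝ (Fin (k + 1)) →ᵃ[ℝ] ℝ))
    (hL : ∀ i j, L i (v j) = if i = j then 1 else 0) (i : Fin (k + 2)) :
    facet v L i = convexHull ℝ (Set.range (v ∘ i.succAbove)) := by
  classical
  apply Set.Subset.antisymm
  · rintro x ⟨hx, hx0⟩
    rw [convexHull_range_eq_exists_affineCombination] at hx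
    obtain ⟨s, ws, hws0, hws1, rfl⟩ := hx
    -- extend weights to univ
    have hWrep : s.affineCombination ℝ v ws
        = Finset.univ.affineCombination ℝ v (Set.indicator ↑s ws) :=
      Finset.affineCombination_indicator_subset _ _ (Finset.subset_univ s)
    set W : Fin (k + 2) → ℝ := Set.indicator ↑s ws with hWdef
    have hW1 : ∑ m, W m = 1 := by
      rw [hWdef, ← hws1, ← Finset.sum_indicator_subset ws (Finset.subset_univ s)]
    have hW0 : ∀ m, 0 ≤ W m := by
      intro m
      by_cases hm : m ∈ s
      · simpa [hWdef, Set.indicator_of_mem, hm] using hws0 m hm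
      · simp [hWdef, Set.indicator_of_notMem, hm]
    -- value of L i
    have hLx : ∀ (t : Finset (Fin (k + 2))) (u : Fin (k + 2) → ℝ), ∑ m ∈ t, u m = 1 →
        L i (t.affineCombination ℝ v u) = ∑ m ∈ t, u m * L i (v m) := by
      intro t u hu
      rw [Finset.map_affineCombination _ _ _ hu (L i),
        Finset.affineCombination_eq_linear_combination _ _ _ hu]
      simp [smul_eq_mul]
    have hWi : W i = 0 := by
      have h0 := hx0
      rw [hWrep, hLx _ _ hW1] at h0
      have : ∑ m, W m * L i (v m) = W i := by
        rw [Finset.sum_eq_single i]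
        · rw [hL i i]; simp
        · intro m _ hm
          rw [hL i m, if_neg (Ne.symm hm), mul_zero]
        · simp
      rw [this] at h0
      exact h0
    -- express as combination over the complement of i
    have hWs : ∑ m : Fin (k + 1), (W ∘ i.succAbove) m = 1 := by
      have := Fin.sum_univ_succAbove W i
      rw [hWi, zero_add] at this
      rw [← hW1, this]
      rfl
    rw [convexHull_range_eq_exists_affineCombination]
    refine ⟨Finset.univ, W ∘ i.succAbove, fun m _ => hW0 _, hWs, ?_⟩
    have hmap : (Finset.univ.map ⟨i.succAbove, Fin.succAbove_right_injective⟩).affineCombination ℝ v W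
        = Finset.univ.affineCombination ℝ (v ∘ i.succAbove) (W ∘ i.succAbove) :=
      Finset.affineCombination_map (s₂ := Finset.univ) ⟨i.succAbove, Fin.succAbove_right_injective⟩ W v
    have hset : Finset.univ.map ⟨i.succAbove, Fin.succAbove_right_injective⟩
        = Finset.univ.erase i := by
      ext m
      simp only [Finset.mem_map, Finset.mem_univ, true_and, Finset.mem_erase, and_true,
        Function.Embedding.coeFn_mk]
      constructor
      · rintro ⟨a, rfl⟩
        exact Fin.succAbove_ne i a
      · intro hm
        obtain ⟨a, ha⟩ := Fin.exists_succAbove_eq hm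
        exact ⟨a, ha⟩
    have herase : (Finset.univ.erase i).affineCombination ℝ v W
        = Finset.univ.affineCombination ℝ v W := by
      have hind : Set.indicator ↑(Finset.univ.erase i) W = W := by
        funext m
        by_cases hm : m = i
        · subst hm
          simp [Set.indicator, hWi]
        · simp [Set.indicator, hm]
      calc (Finset.univ.erase i).affineCombination ℝ v W
          = Finset.univ.affineCombination ℝ v (Set.indicator ↑(Finset.univ.erase i) W) :=
            Finset.affineCombination_indicator_subset _ _ (Finset.subset_univ _)
        _ = Finset.univ.affineCombination ℝ v W := by rw [hind]
    rw [← hmap, hset, herase, ← hWrep]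
  · intro x hx
    have hsub : Set.range (v ∘ i.succAbove) ⊆ Set.range v := by
      rintro y ⟨m, rfl⟩
      exact ⟨i.succAbove m, rfl⟩
    constructor
    · exact convexHull_mono hsub hx
    · rw [convexHull_range_eq_exists_affineCombination] at hx
      obtain ⟨s, ws, hws0, hws1, rfl⟩ := hx
      rw [Finset.map_affineCombination _ _ _ hws1 (L i),
        Finset.affineCombination_eq_linear_combination _ _ _ hws1]
      refine Finset.sum_eq_zero fun m _ => ?_
      have : (L i) ((v ∘ i.succAbove) m) = 0 := by
        show L i (v (i.succAbove m)) = 0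
        rw [hL, if_neg (Fin.succAbove_ne i m).symm]
      rw [smul_eq_mul, show (⇑(L i) ∘ v ∘ i.succAbove) m = 0 from this, mul_zero]

theorem stmt11 (d : ℕ) (hd : 2 ≤ d)
    (v : Fin (d + 1) → EuclideanSpace ℝ (Fin d))
    (hv : AffineIndependent ℝ v)
    (L : Fin (d + 1) → (EuclideanSpace ℝ (Fin d) →ᵃ[ℝ] ℝ))
    (hL : ∀ i j, L i (v j) = if i = j then 1 else 0)
    (ℓ : EuclideanSpace ℝ (Fin d) →ᵃ[ℝ] ℝ)
    (hℓ : ∀ i, ∫ x in facet v L i, ℓ x ∂(μH[(d : ℝ) - 1]) = 0) :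
    ℓ = 0 := by
  classical
  obtain ⟨k, rfl⟩ : ∃ k, d = k + 1 := ⟨d - 1, by omega⟩
  have hcast : ((k + 1 : ℕ) : ℝ) - 1 = ((k : ℕ) : ℝ) := by push_cast; ring
  have key : ∀ i : Fin (k + 2), ∑ m : Fin (k + 1), ℓ (v (i.succAbove m)) = 0 := by
    intro i
    set w : Fin (k + 1) → EuclideanSpace ℝ (Fin (k + 1)) := v ∘ i.succAbove with hwdef
    have hw : AffineIndependent ℝ w :=
      hv.comp_embedding ⟨i.succAbove, Fin.succAbove_right_injective⟩
    set Wsp : Submodule ℝ (EuclideanSpace ℝ (Fin (k + 1))) := vectorSpan ℝ (Set.range w)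
      with hWsp
    have hrank : finrank ℝ Wsp = k := hw.finrank_vectorSpan (by simp)
    set e : Wsp ≃ₗᵢ[ℝ] EuclideanSpace ℝ (Fin k) :=
      ((stdOrthonormalBasis ℝ Wsp).reindex (finCongr hrank)).repr with he
    set φ : EuclideanSpace ℝ (Fin k) → EuclideanSpace ℝ (Fin (k + 1)) :=
      fun y => w 0 + (e.symm y : EuclideanSpace ℝ (Fin (k + 1))) with hφ
    have hφiso : Isometry φ := by
      refine Isometry.of_dist_eq fun x y => ?_
      show dist (w 0 + (e.symm x : EuclideanSpace ℝ (Fin (k + 1))))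
        (w 0 + (e.symm y : EuclideanSpace ℝ (Fin (k + 1)))) = dist x y
      rw [dist_add_left, ← Subtype.dist_eq, e.symm.dist_map]
    set lin : EuclideanSpace ℝ (Fin k) →ₗ[ℝ] EuclideanSpace ℝ (Fin (k + 1)) :=
      Wsp.subtype.comp (e.symm.toLinearEquiv : EuclideanSpace ℝ (Fin k) ≃ₗ[ℝ] Wsp).toLinearMap
      with hlin
    set φA : EuclideanSpace ℝ (Fin k) →ᵃ[ℝ] EuclideanSpace ℝ (Fin (k + 1)) :=
      ⟨φ, lin, by
        intro p u
        show w 0 + ((e.symm (u + p) : Wsp) : EuclideanSpace ℝ (Fin (k + 1)))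
          = (e.symm u : EuclideanSpace ℝ (Fin (k + 1)))
            + (w 0 + (e.symm p : EuclideanSpace ℝ (Fin (k + 1))))
        rw [map_add, Submodule.coe_add]
        abel⟩ with hφA
    have hφAcoe : ⇑φA = φ := rfl
    have hmem : ∀ m, w m - w 0 ∈ Wsp := fun m => by
      have h := vsub_mem_vectorSpan ℝ (Set.mem_range_self (f := w) m) (Set.mem_range_self (f := w) 0)
      exact h
    set w' : Fin (k + 1) → EuclideanSpace ℝ (Fin k) :=
      fun m => e ⟨w m - w 0, hmem m⟩ with hw'def
    have hφw' : ∀ m, φ (w' m) = w m := by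
      intro m
      show w 0 + ((e.symm (e ⟨w m - w 0, hmem m⟩) : Wsp) : EuclideanSpace ℝ (Fin (k + 1))) = w m
      rw [e.symm_apply_apply]
      show w 0 + (w m - w 0) = w m
      abel
    have hcomp : ⇑φA ∘ w' = w := funext fun m => hφw' m
    have hw' : AffineIndependent ℝ w' := AffineIndependent.of_comp φA (by rw [hcomp]; exact hw)
    -- image of the simplex
    have himg : φ '' (convexHull ℝ (Set.range w')) = convexHull ℝ (Set.range w) := by
      rw [← hφAcoe, φA.image_convexHull, ← Set.range_comp, hcomp]
    -- measure transfer
    have hφm : Measurable φ := hφiso.continuous.measurable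
    have hembφ : MeasurableEmbedding φ := hφiso.isClosedEmbedding.measurableEmbedding
    have hmapφ : Measure.map φ (μH[(k : ℝ)]) = (μH[(k : ℝ)]).restrict (Set.range φ) := by
      ext s hs
      rw [Measure.map_apply hφm hs, Measure.restrict_apply hs,
        ← hφiso.hausdorffMeasure_image (Or.inl (by positivity : (0:ℝ) ≤ (k:ℝ))),
        Set.image_preimage_eq_inter_range]
    have hFmeas : MeasurableSet (convexHull ℝ (Set.range w)) :=
      ((Set.finite_range w).isCompact_convexHull ℝ).isClosed.measurableSet
    have hFsub : convexHull ℝ (Set.range w) ⊆ Set.range φ := by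
      rw [← himg]
      exact Set.image_subset_range _ _
    have hint0 : ∫ x in convexHull ℝ (Set.range w), ℓ x ∂(μH[(k : ℝ)]) = 0 := by
      have h := hℓ i
      rw [facet_eq v hv L hL i, ← hwdef] at h
      rw [← hcast]
      exact h
    have htrans : ∫ x in convexHull ℝ (Set.range w), ℓ x ∂(μH[(k : ℝ)])
        = ∫ y in convexHull ℝ (Set.range w'), ℓ (φ y) ∂(μH[(k : ℝ)]) := by
      have h1 : (μH[(k : ℝ)] : Measure (EuclideanSpace ℝ (Fin (k+1)))).restrict
            (convexHull ℝ (Set.range w))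
          = ((μH[(k : ℝ)]).restrict (Set.range φ)).restrict (convexHull ℝ (Set.range w)) := by
        rw [Measure.restrict_restrict hFmeas, Set.inter_eq_self_of_subset_left hFsub]
      calc ∫ x in convexHull ℝ (Set.range w), ℓ x ∂(μH[(k : ℝ)])
          = ∫ x in convexHull ℝ (Set.range w), ℓ x ∂((μH[(k : ℝ)]).restrict (Set.range φ)) := by
            rw [h1]
        _ = ∫ x in convexHull ℝ (Set.range w), ℓ x ∂(Measure.map φ (μH[(k : ℝ)])) := by
            rw [hmapφ]
        _ = ∫ y in φ ⁻¹' (convexHull ℝ (Set.range w)), ℓ (φ y) ∂(μH[(k : ℝ)]) :=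
            hembφ.setIntegral_map _ _
        _ = ∫ y in convexHull ℝ (Set.range w'), ℓ (φ y) ∂(μH[(k : ℝ)]) := by
            rw [← himg, Set.preimage_image_eq _ hφiso.injective]
    have hg : ∫ y in convexHull ℝ (Set.range w'), (ℓ.comp φA) y ∂(μH[(k : ℝ)]) = 0 := by
      rw [show ⇑(ℓ.comp φA) = fun y => ℓ (φ y) from rfl]
      rw [← htrans]
      exact hint0
    have := simplex_sum_eq w' hw' (ℓ.comp φA) hg
    calc ∑ m : Fin (k + 1), ℓ (v (i.succAbove m))
        = ∑ m : Fin (k + 1), (ℓ.comp φA) (w' m) := by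
          refine Finset.sum_congr rfl fun m _ => ?_
          show ℓ (v (i.succAbove m)) = ℓ (φ (w' m))
          rw [hφw' m]
          rfl
      _ = 0 := this
  -- conclude values at vertices vanish
  set S : ℝ := ∑ m : Fin (k + 2), ℓ (v m) with hS
  have hSi : ∀ i : Fin (k + 2), ℓ (v i) = S := by
    intro i
    have h := key i
    have h2 := Fin.sum_univ_succAbove (fun m => ℓ (v m)) i
    rw [← hS] at h2
    rw [h] at h2
    rw [h2]; ring
  have hS0 : S = 0 := by
    have : S = ∑ m : Fin (k + 2), S := by
      rw [hS]
      exact Finset.sum_congr rfl fun m _ => hSi m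
    rw [Finset.sum_const, Finset.card_univ, Fintype.card_fin, nsmul_eq_mul] at this
    have hk : (0:ℝ) < (k + 2 : ℕ) - 1 := by
      push_cast; linarith
    nlinarith [this]
  have hvi : ∀ i, ℓ (v i) = 0 := fun i => by rw [hSi i, hS0]
  -- an affine map vanishing on a spanning set is zero
  have htop : affineSpan ℝ (Set.range v) = ⊤ := by
    rw [hv.affineSpan_eq_top_iff_card_eq_finrank_add_one]
    simp
  ext x
  have hle : affineSpan ℝ (Set.range v)
      ≤ AffineSubspace.comap ℓ ((⊥ : Submodule ℝ ℝ).toAffineSubspace) := by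
    rw [affineSpan_le]
    rintro y ⟨m, rfl⟩
    rw [AffineSubspace.mem_coe, AffineSubspace.mem_comap, Submodule.mem_toAffineSubspace,
      Submodule.mem_bot]
    exact hvi m
  have hx : x ∈ affineSpan ℝ (Set.range v) := htop ▸ AffineSubspace.mem_top ℝ _ x
  have h3 : x ∈ AffineSubspace.comap ℓ ((⊥ : Submodule ℝ ℝ).toAffineSubspace) := hle hx
  rw [AffineSubspace.mem_comap, Submodule.mem_toAffineSubspace, Submodule.mem_bot] at h3
  simpa using h3
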